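/- For any C¹ function T : ℝ → ℝ with 0 ≤ T(x) ≤ 1 for all x, T(x) → 1 as x → −∞, and T(x) → 0 as x → +∞, one has (∫_{−∞}^{∞} (T′(x))² dx) · (∫_{−∞}^{∞} T(x)(1 − T(x)) dx) ≥ (π/8)² (where the inequality holds trivially if either integral is infinite). -/

import Mathlib

open Real MeasureTheory Filter


lemma sqrt_beta_integral : ∫ t in (0:ℝ)..1, Real.sqrt (t*(1-t)) = π/8 := by
  have key : ∀ t : ℝ, Real.sqrt (t*(1-t)) = (1/2) * Real.sqrt (1 - (2*t-1)^2) := by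
    intro t
    have : 1 - (2*t-1)^2 = 4 * (t*(1-t)) := by ring
    rw [this, Real.sqrt_mul (by norm_num : (0:ℝ) ≤ 4)]
    rw [show Real.sqrt 4 = 2 by rw [show (4:ℝ) = 2^2 by norm_num, Real.sqrt_sq (by norm_num)]]
    ring
  simp_rw [key]
  rw [intervalIntegral.integral_const_mul]
  rw [intervalIntegral.integral_comp_mul_sub (fun x => Real.sqrt (1 - x^2)) (by norm_num : (2:ℝ) ≠ 0) 1]
  norm_num [integral_sqrt_one_sub_sq]
  ring


/-- For any `C¹` function `T : ℝ → ℝ` with `0 ≤ T ≤ 1`, `T → 1` at `−∞` and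
`T → 0` at `+∞`, one has `(∫(T')²)(∫T(1−T)) ≥ (π/8)²` (as an inequality of
possibly infinite Lebesgue integrals of nonnegative functions). -/
theorem functional_inequality (T : ℝ → ℝ) (hT : ContDiff ℝ 1 T)
    (h0 : ∀ x, 0 ≤ T x) (h1 : ∀ x, T x ≤ 1)
    (hbot : Tendsto T atBot (nhds 1)) (htop : Tendsto T atTop (nhds 0)) :
    (∫⁻ x : ℝ, ENNReal.ofReal ((deriv T x) ^ 2)) *
      (∫⁻ x : ℝ, ENNReal.ofReal (T x * (1 - T x)))
      ≥ ENNReal.ofReal ((π / 8) ^ 2) := by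
  have hTc : Continuous T := hT.continuous
  have hT' : Continuous (deriv T) := hT.continuous_deriv le_rfl
  have hQc : Continuous (fun x => T x * (1 - T x)) := hTc.mul (continuous_const.sub hTc)
  have hQnn : ∀ x, 0 ≤ T x * (1 - T x) := fun x => mul_nonneg (h0 x) (by linarith [h1 x])
  set A := ∫⁻ x : ℝ, ENNReal.ofReal ((deriv T x) ^ 2) with hAdef
  set B := ∫⁻ x : ℝ, ENNReal.ofReal (T x * (1 - T x)) with hBdef
  have hBne : B ≠ 0 := by
    intro h
    obtain ⟨a, ha⟩ := (hbot.eventually_const_lt (by norm_num : (3/4:ℝ) < 1)).exists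
    obtain ⟨b, hb⟩ := (htop.eventually_lt_const (by norm_num : (0:ℝ) < 1/4)).exists
    have hmem : (1/2:ℝ) ∈ Set.uIcc (T a) (T b) := by
      rw [Set.mem_uIcc]; right; constructor <;> linarith
    obtain ⟨c, -, hc⟩ := intermediate_value_uIcc (hTc.continuousOn) hmem
    have hUopen : IsOpen {x : ℝ | 0 < T x * (1 - T x)} := isOpen_lt continuous_const hQc
    have hcU : c ∈ {x : ℝ | 0 < T x * (1 - T x)} := by
      simp only [Set.mem_setOf_eq, hc]; norm_num
    have hpos := hUopen.measure_pos volume ⟨c, hcU⟩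
    rw [hBdef, lintegral_eq_zero_iff hQc.measurable.ennreal_ofReal] at h
    rw [Filter.EventuallyEq, ae_iff] at h
    simp only [Pi.zero_apply] at h
    have h0' : volume {x : ℝ | ENNReal.ofReal (T x * (1 - T x)) ≠ 0} = 0 := h
    have hsub : {x : ℝ | 0 < T x * (1 - T x)} ⊆ {x : ℝ | ENNReal.ofReal (T x * (1 - T x)) ≠ 0} :=
      fun x hx => (ENNReal.ofReal_pos.mpr hx).ne'
    exact absurd (measure_mono_null hsub h0') hpos.ne'
  have hAne : A ≠ 0 := by
    intro h
    have hderiv0 : ∀ x, deriv T x = 0 := by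
      by_contra hne
      push_neg at hne
      obtain ⟨x₀, hx₀⟩ := hne
      have hUopen : IsOpen {x : ℝ | 0 < (deriv T x)^2} := isOpen_lt continuous_const (hT'.pow 2)
      have hx₀U : x₀ ∈ {x : ℝ | 0 < (deriv T x)^2} := by
        simp only [Set.mem_setOf_eq]; rw [← sq_abs]; exact pow_pos (abs_pos.mpr hx₀) 2
      have hpos := hUopen.measure_pos volume ⟨x₀, hx₀U⟩
      rw [hAdef, lintegral_eq_zero_iff (show Measurable (fun x => ENNReal.ofReal ((deriv T x)^2)) from (hT'.pow 2).measurable.ennreal_ofReal)] at h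
      rw [Filter.EventuallyEq, ae_iff] at h
      simp only [Pi.zero_apply] at h
      have h0' : volume {x : ℝ | ENNReal.ofReal ((deriv T x)^2) ≠ 0} = 0 := h
      have hsub : {x : ℝ | 0 < (deriv T x)^2} ⊆ {x : ℝ | ENNReal.ofReal ((deriv T x)^2) ≠ 0} :=
        fun x hx => (ENNReal.ofReal_pos.mpr hx).ne'
      exact absurd (measure_mono_null hsub h0') hpos.ne'
    have hconst : ∀ x, T x = T 0 := fun x =>
      is_const_of_deriv_eq_zero (hT.differentiable one_ne_zero) hderiv0 x 0
    have e1 : T 0 = 1 := tendsto_nhds_unique tendsto_const_nhds (hbot.congr fun x => hconst x)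
    have e0 : T 0 = 0 := tendsto_nhds_unique tendsto_const_nhds (htop.congr fun x => hconst x)
    rw [e1] at e0; norm_num at e0
  by_cases hA : A = ⊤
  · rw [ge_iff_le, hA, ENNReal.top_mul hBne]; exact le_top
  by_cases hB : B = ⊤
  · rw [ge_iff_le, hB, ENNReal.mul_top hAne]; exact le_top
  have hsqInt : Integrable (fun x => (deriv T x)^2) := by
    refine ⟨((hT'.pow 2)).aestronglyMeasurable, ?_⟩
    rw [hasFiniteIntegral_iff_ofReal (Eventually.of_forall fun x => sq_nonneg _)]
    exact lt_top_iff_ne_top.mpr hA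
  have hQInt : Integrable (fun x => T x * (1 - T x)) := by
    refine ⟨hQc.aestronglyMeasurable, ?_⟩
    rw [hasFiniteIntegral_iff_ofReal (Eventually.of_forall fun x => hQnn x)]
    exact lt_top_iff_ne_top.mpr hB
  set g : ℝ → ℝ := fun u => Real.sqrt (u * (1-u)) with hgdef
  have hgc : Continuous g := (continuous_id.mul (continuous_const.sub continuous_id)).sqrt
  set G : ℝ → ℝ := fun u => ∫ t in (0:ℝ)..u, g t with hGdef
  have hG : ∀ u, HasDerivAt G (g u) u := fun u =>
    intervalIntegral.integral_hasDerivAt_right (hgc.intervalIntegrable 0 u)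
      (hgc.stronglyMeasurableAtFilter _ _) hgc.continuousAt
  have hGdiff : Differentiable ℝ G := fun u => (hG u).differentiableAt
  have hGc : Continuous G := hGdiff.continuous
  have hphi : ∀ x, HasDerivAt (G ∘ T) (g (T x) * deriv T x) x := fun x =>
    (hG (T x)).comp x ((hT.differentiable one_ne_zero x).hasDerivAt)
  have hbound : ∀ x, |g (T x) * deriv T x| ≤ ((deriv T x)^2 + T x * (1 - T x))/2 := by
    intro x
    have hsq : g (T x) ^ 2 = T x * (1 - T x) := Real.sq_sqrt (hQnn x)
    have h2 : |g (T x) * deriv T x| = |deriv T x| * g (T x) := by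
      rw [abs_mul, abs_of_nonneg (Real.sqrt_nonneg _), mul_comm]
    nlinarith [sq_nonneg (|deriv T x| - g (T x)), sq_abs (deriv T x), abs_nonneg (deriv T x),
      Real.sqrt_nonneg (T x * (1 - T x))]
  have hInt : Integrable (fun x => g (T x) * deriv T x) := by
    refine Integrable.mono' ((hsqInt.add hQInt).div_const 2)
      (((hgc.comp hTc).mul hT').aestronglyMeasurable)
      (Eventually.of_forall fun x => ?_)
    rw [Real.norm_eq_abs]
    exact hbound x
  have hG0 : G 0 = 0 := intervalIntegral.integral_same
  have hG1 : G 1 = π/8 := sqrt_beta_integral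
  have hFTC : ∫ x, g (T x) * deriv T x = G 0 - G 1 :=
    MeasureTheory.integral_of_hasDerivAt_of_tendsto hphi hInt
      ((hGc.tendsto 1).comp hbot) ((hGc.tendsto 0).comp htop)
  have hIntH : Integrable (fun x => |deriv T x| * g (T x)) := by
    refine hInt.abs.congr (Eventually.of_forall fun x => ?_)
    show |g (T x) * deriv T x| = |deriv T x| * g (T x)
    rw [abs_mul, abs_of_nonneg (Real.sqrt_nonneg _), mul_comm]
  have habs : π/8 ≤ ∫ x, |deriv T x| * g (T x) := by
    have e1 : |∫ x, g (T x) * deriv T x| = π/8 := by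
      rw [hFTC, hG0, hG1, zero_sub, abs_neg, abs_of_nonneg (by positivity : (0:ℝ) ≤ π/8)]
    calc π/8 = |∫ x, g (T x) * deriv T x| := e1.symm
      _ ≤ ∫ x, |g (T x) * deriv T x| := by
          have := norm_integral_le_integral_norm (μ := volume) (fun x => g (T x) * deriv T x)
          simp only [Real.norm_eq_abs] at this
          exact this
      _ = ∫ x, |deriv T x| * g (T x) := by
          refine MeasureTheory.integral_congr_ae (Eventually.of_forall fun x => ?_)
          show |g (T x) * deriv T x| = |deriv T x| * g (T x)
          rw [abs_mul, abs_of_nonneg (Real.sqrt_nonneg _), mul_comm]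
  have hHnn : ∀ x : ℝ, 0 ≤ |deriv T x| * g (T x) := fun x =>
    mul_nonneg (abs_nonneg _) (Real.sqrt_nonneg _)
  have hlint : ENNReal.ofReal (π/8) ≤ ∫⁻ x, ENNReal.ofReal (|deriv T x| * g (T x)) := by
    rw [← ofReal_integral_eq_lintegral_ofReal hIntH (Eventually.of_forall hHnn)]
    exact ENNReal.ofReal_le_ofReal habs
  have hCS : (∫⁻ x, ENNReal.ofReal (|deriv T x| * g (T x)))
      ≤ A ^ ((1:ℝ)/2) * B ^ ((1:ℝ)/2) := by
    have hconj : Real.HolderConjugate 2 2 := ⟨by norm_num, by norm_num, by norm_num⟩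
    have := ENNReal.lintegral_mul_le_Lp_mul_Lq volume hconj
      (f := fun x => ENNReal.ofReal |deriv T x|)
      (g := fun x => ENNReal.ofReal (g (T x)))
      (hT'.abs.measurable.ennreal_ofReal.aemeasurable)
      ((hgc.comp hTc).measurable.ennreal_ofReal.aemeasurable)
    have e1 : ∀ x : ℝ, ENNReal.ofReal (|deriv T x| * g (T x))
        = ((fun x => ENNReal.ofReal |deriv T x|) * fun x => ENNReal.ofReal (g (T x))) x :=
      fun x => ENNReal.ofReal_mul (abs_nonneg _)
    have e2 : ∀ x : ℝ, ENNReal.ofReal |deriv T x| ^ (2:ℝ) = ENNReal.ofReal ((deriv T x)^2) := by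
      intro x
      rw [ENNReal.ofReal_rpow_of_nonneg (abs_nonneg _) (by norm_num : (0:ℝ) ≤ 2)]
      congr 1
      rw [show (2:ℝ) = ((2:ℕ):ℝ) by norm_num, Real.rpow_natCast, sq_abs]
    have e3 : ∀ x : ℝ, ENNReal.ofReal (g (T x)) ^ (2:ℝ) = ENNReal.ofReal (T x * (1 - T x)) := by
      intro x
      rw [ENNReal.ofReal_rpow_of_nonneg (Real.sqrt_nonneg _) (by norm_num : (0:ℝ) ≤ 2)]
      congr 1
      rw [show (2:ℝ) = ((2:ℕ):ℝ) by norm_num, Real.rpow_natCast, Real.sq_sqrt (hQnn x)]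
    simp_rw [e1, hAdef, hBdef, ← e2, ← e3]
    exact this
  have hfin : ENNReal.ofReal (π/8) ≤ A ^ ((1:ℝ)/2) * B ^ ((1:ℝ)/2) := hlint.trans hCS
  rw [ge_iff_le]
  calc ENNReal.ofReal ((π/8)^2) = (ENNReal.ofReal (π/8))^2 := by
        rw [← ENNReal.ofReal_pow (by positivity)]
    _ ≤ (A ^ ((1:ℝ)/2) * B ^ ((1:ℝ)/2))^2 := pow_le_pow_left' hfin 2
    _ = A * B := by
        rw [mul_pow, ← ENNReal.rpow_natCast (A ^ ((1:ℝ)/2)) 2,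
          ← ENNReal.rpow_natCast (B ^ ((1:ℝ)/2)) 2, ← ENNReal.rpow_mul, ← ENNReal.rpow_mul]
        norm_num
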